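/- The generating function of A₁-type Macdonald polynomials holds as an identity of formal power series in z: Σ_{n≥0} M_n(x; q, t)·((t²;q²)_n/(q²;q²)_n)·z^n = (t²xz; q²)_∞ (t²x⁻¹z; q²)_∞ / ((xz; q²)_∞ (x⁻¹z; q²)_∞). -/

import Mathlib

/-- The finite q-Pochhammer symbol `(a;q)_n = ∏_{j=0}^{n-1} (1 − a q^j)`. -/
noncomputable def qPoch (a q : ℂ) (n : ℕ) : ℂ := ∏ j ∈ Finset.range n, (1 - a * q ^ j)

/-- The `A₁`-type Macdonald polynomial. -/
noncomputable def macdonaldA1 (n : ℕ) (x q t : ℂ) : ℂ :=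
  qPoch (q ^ 2) (q ^ 2) n / qPoch (t ^ 2) (q ^ 2) n *
    ∑ j ∈ Finset.range (n + 1),
      qPoch (t ^ 2) (q ^ 2) j * qPoch (t ^ 2) (q ^ 2) (n - j) /
          (qPoch (q ^ 2) (q ^ 2) j * qPoch (q ^ 2) (q ^ 2) (n - j)) *
        x ^ ((j : ℤ) - ((n : ℤ) - (j : ℤ)))

open Filter Finset Topology

namespace QBinAux

noncomputable def qc (a Q : ℂ) (n : ℕ) : ℂ := qPoch a Q n / qPoch Q Q n

lemma qPoch_succ (a Q : ℂ) (n : ℕ) :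
    qPoch a Q (n + 1) = qPoch a Q n * (1 - a * Q ^ n) :=
  Finset.prod_range_succ _ n

lemma one_sub_ne_zero {w : ℂ} (hw : ‖w‖ < 1) : (1 : ℂ) - w ≠ 0 := by
  intro h
  rw [sub_eq_zero] at h
  rw [← h] at hw
  simp at hw

lemma qPochQ_ne_zero {Q : ℂ} (hQ : ‖Q‖ < 1) (n : ℕ) : qPoch Q Q n ≠ 0 := by
  refine Finset.prod_ne_zero_iff.mpr fun j _ => one_sub_ne_zero ?_
  calc ‖Q * Q ^ j‖ = ‖Q‖ * ‖Q‖ ^ j := by rw [norm_mul, norm_pow]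
    _ ≤ ‖Q‖ * 1 := by
        gcongr
        exact pow_le_one₀ (norm_nonneg _) hQ.le
    _ < 1 := by simpa using hQ

lemma qc_zero (a Q : ℂ) : qc a Q 0 = 1 := by simp [qc, qPoch]

lemma qc_ne_zero {a Q : ℂ} (hQ : ‖Q‖ < 1) (ha : ∀ m, qPoch a Q m ≠ 0) (n : ℕ) :
    qc a Q n ≠ 0 := div_ne_zero (ha n) (qPochQ_ne_zero hQ n)

lemma qc_succ {a Q : ℂ} (hQ : ‖Q‖ < 1) (n : ℕ) :
    qc a Q (n + 1) = qc a Q n * ((1 - a * Q ^ n) / (1 - Q ^ (n + 1))) := by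
  have h1 := qPochQ_ne_zero hQ n
  have h2 : (1 : ℂ) - Q * Q ^ n ≠ 0 := by
    have := qPochQ_ne_zero hQ (n + 1)
    rw [qPoch_succ] at this
    exact right_ne_zero_of_mul this
  unfold qc
  rw [qPoch_succ, qPoch_succ, pow_succ']
  field_simp

lemma qc_succ_mul {a Q : ℂ} (hQ : ‖Q‖ < 1) (n : ℕ) :
    qc a Q (n + 1) * (1 - Q ^ (n + 1)) = qc a Q n * (1 - a * Q ^ n) := by
  have h2 : (1 : ℂ) - Q ^ (n + 1) ≠ 0 := by
    apply one_sub_ne_zero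
    rw [norm_pow]
    exact pow_lt_one₀ (norm_nonneg _) hQ (Nat.succ_ne_zero n)
  rw [qc_succ hQ]
  field_simp

end QBinAux

namespace QBinAux

lemma tendsto_one_sub_mul_pow {b Q : ℂ} (hQ : ‖Q‖ < 1) :
    Tendsto (fun n : ℕ => (1 : ℂ) - b * Q ^ n) atTop (𝓝 1) := by
  have h0 : Tendsto (fun n : ℕ => Q ^ n) atTop (𝓝 0) :=
    tendsto_pow_atTop_nhds_zero_of_norm_lt_one hQ
  have : Tendsto (fun n : ℕ => (1 : ℂ) - b * Q ^ n) atTop (𝓝 (1 - b * 0)) :=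
    tendsto_const_nhds.sub (h0.const_mul b)
  simpa using this

lemma summable_norm_qc {a Q u : ℂ} (hQ : ‖Q‖ < 1) (ha : ∀ m, qPoch a Q m ≠ 0)
    (hu : ‖u‖ < 1) : Summable fun n => ‖qc a Q n * u ^ n‖ := by
  rcases eq_or_ne u 0 with rfl | hu0
  · apply summable_of_ne_finset_zero (s := {0})
    intro n hn
    simp only [mem_singleton] at hn
    simp [zero_pow hn]
  · apply summable_of_ratio_test_tendsto_lt_one hu
    · filter_upwards with n
      simp only [ne_eq, norm_eq_zero, mul_eq_zero, not_or]
      exact ⟨qc_ne_zero hQ ha n, pow_ne_zero n hu0⟩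
    · have hkey : ∀ n : ℕ, ‖‖qc a Q (n + 1) * u ^ (n + 1)‖‖ / ‖‖qc a Q n * u ^ n‖‖
          = ‖u‖ * ‖(1:ℂ) - a * Q ^ n‖ / ‖(1:ℂ) - Q ^ (n + 1)‖ := by
        intro n
        have hne : ‖qc a Q n * u ^ n‖ ≠ 0 := by
          simp only [ne_eq, norm_eq_zero, mul_eq_zero, not_or]
          exact ⟨qc_ne_zero hQ ha n, pow_ne_zero n hu0⟩
        have hstep : qc a Q (n + 1) * u ^ (n + 1)
            = (qc a Q n * u ^ n) * (u * ((1 - a * Q ^ n) / (1 - Q ^ (n + 1)))) := by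
          rw [qc_succ hQ]; ring
        rw [Real.norm_eq_abs, Real.norm_eq_abs, abs_of_nonneg (norm_nonneg _),
          abs_of_nonneg (norm_nonneg _), hstep, norm_mul, mul_comm, mul_div_assoc,
          div_self hne, mul_one, norm_mul, norm_div]
        ring
      rw [show (‖u‖ : ℝ) = ‖u‖ * ‖(1:ℂ)‖ / ‖(1:ℂ)‖ by simp]
      apply Tendsto.congr (fun n => (hkey n).symm)
      apply Tendsto.div
      · exact tendsto_const_nhds.mul (tendsto_one_sub_mul_pow hQ).norm
      · have : Tendsto (fun n : ℕ => (1:ℂ) - Q ^ (n+1)) atTop (𝓝 1) := by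
          have := (tendsto_one_sub_mul_pow (b := Q) hQ)
          simpa [pow_succ'] using this
        exact this.norm
      · simp

lemma summable_qc {a Q u : ℂ} (hQ : ‖Q‖ < 1) (ha : ∀ m, qPoch a Q m ≠ 0)
    (hu : ‖u‖ < 1) : Summable fun n => qc a Q n * u ^ n :=
  (summable_norm_qc hQ ha hu).of_norm

end QBinAux

namespace QBinAux

noncomputable def S (a Q u : ℂ) : ℂ := ∑' n, qc a Q n * u ^ n

lemma funceq {a Q u : ℂ} (hQ : ‖Q‖ < 1) (ha : ∀ m, qPoch a Q m ≠ 0) (hu : ‖u‖ < 1) :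
    (1 - u) * S a Q u = (1 - a * u) * S a Q (Q * u) := by
  have hQu : ‖Q * u‖ < 1 := by
    rw [norm_mul]
    calc ‖Q‖ * ‖u‖ ≤ 1 * ‖u‖ := mul_le_mul_of_nonneg_right hQ.le (norm_nonneg _)
      _ < 1 := by simpa using hu
  have s1 := summable_qc hQ ha hu
  have s2 := summable_qc hQ ha hQu
  set A : ℕ → ℂ := fun n => qc a Q n * (1 - Q ^ n) * u ^ n with hA
  set B : ℕ → ℂ := fun n => qc a Q n * (1 - a * Q ^ n) * u ^ (n + 1) with hB
  have hAB : ∀ n, A (n + 1) = B n := by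
    intro n
    simp only [hA, hB]
    linear_combination u ^ (n + 1) * qc_succ_mul (a := a) hQ n
  have hsA : Summable A := by
    apply (s1.sub s2).congr
    intro n
    simp only [hA, mul_pow]
    ring
  have hsB : Summable B := by
    apply ((s1.mul_left u).sub (s2.mul_left (a * u))).congr
    intro n
    simp only [hB, mul_pow]
    ring
  have h0 : ∑' n, A n = ∑' n, B n := by
    rw [Summable.tsum_eq_zero_add hsA]
    have hA0 : A 0 = 0 := by simp [hA]
    rw [hA0, zero_add]
    exact tsum_congr hAB
  have key : ∑' n, ((1 - u) * (qc a Q n * u ^ n) - (1 - a * u) * (qc a Q n * (Q * u) ^ n)) = 0 := by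
    calc ∑' n, ((1 - u) * (qc a Q n * u ^ n) - (1 - a * u) * (qc a Q n * (Q * u) ^ n))
        = ∑' n, (A n - B n) := by
          apply tsum_congr
          intro n
          simp only [hA, hB, mul_pow]
          ring
      _ = ∑' n, A n - ∑' n, B n := Summable.tsum_sub hsA hsB
      _ = 0 := by rw [h0, sub_self]
  have := Summable.tsum_sub (s1.mul_left (1 - u)) (s2.mul_left (1 - a * u))
  rw [key] at this
  have h2 := this.symm
  rw [sub_eq_zero] at h2
  unfold S
  rw [← tsum_mul_left, ← tsum_mul_left]
  exact h2

end QBinAux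

namespace QBinAux

lemma norm_pow_mul_lt {Q u : ℂ} (hQ : ‖Q‖ < 1) (hu : ‖u‖ < 1) (m : ℕ) :
    ‖Q ^ m * u‖ < 1 := by
  rw [norm_mul, norm_pow]
  calc ‖Q‖ ^ m * ‖u‖ ≤ 1 * ‖u‖ :=
        mul_le_mul_of_nonneg_right (pow_le_one₀ (norm_nonneg _) hQ.le) (norm_nonneg _)
    _ < 1 := by simpa using hu

lemma iter {a Q u : ℂ} (hQ : ‖Q‖ < 1) (ha : ∀ m, qPoch a Q m ≠ 0) (hu : ‖u‖ < 1) (m : ℕ) :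
    S a Q u * ∏ i ∈ range m, (1 - u * Q ^ i)
      = (∏ i ∈ range m, (1 - a * u * Q ^ i)) * S a Q (Q ^ m * u) := by
  induction m with
  | zero => simp
  | succ m ih =>
    rw [prod_range_succ, prod_range_succ, ← mul_assoc, ih]
    have hfe := funceq (u := Q ^ m * u) hQ ha (norm_pow_mul_lt hQ hu m)
    rw [show Q ^ (m + 1) * u = Q * (Q ^ m * u) by ring]
    linear_combination (∏ i ∈ range m, (1 - a * u * Q ^ i)) * hfe

lemma tendsto_S {a Q u : ℂ} (hQ : ‖Q‖ < 1) (ha : ∀ m, qPoch a Q m ≠ 0) (hu : ‖u‖ < 1) :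
    Tendsto (fun m => S a Q (Q ^ m * u)) atTop (𝓝 1) := by
  have hT : Summable fun n => ‖qc a Q (n + 1) * u ^ (n + 1)‖ :=
    (summable_nat_add_iff (f := fun n => ‖qc a Q n * u ^ n‖) 1).mpr (summable_norm_qc hQ ha hu)
  set T : ℝ := ∑' n, ‖qc a Q (n + 1) * u ^ (n + 1)‖ with hTdef
  have key : ∀ m : ℕ, ‖S a Q (Q ^ m * u) - 1‖ ≤ ‖Q‖ ^ m * T := by
    intro m
    have hv : ‖Q ^ m * u‖ < 1 := norm_pow_mul_lt hQ hu m
    have hsv := summable_qc hQ ha hv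
    have hsv' : Summable fun n => ‖qc a Q (n + 1) * (Q ^ m * u) ^ (n + 1)‖ :=
      (summable_nat_add_iff (f := fun n => ‖qc a Q n * (Q ^ m * u) ^ n‖) 1).mpr
        (summable_norm_qc hQ ha hv)
    have hS : S a Q (Q ^ m * u) - 1 = ∑' n, qc a Q (n + 1) * (Q ^ m * u) ^ (n + 1) := by
      unfold S
      rw [Summable.tsum_eq_zero_add hsv, qc_zero, pow_zero, mul_one]
      ring
    rw [hS]
    calc ‖∑' n, qc a Q (n + 1) * (Q ^ m * u) ^ (n + 1)‖
        ≤ ∑' n, ‖qc a Q (n + 1) * (Q ^ m * u) ^ (n + 1)‖ := norm_tsum_le_tsum_norm hsv'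
      _ ≤ ∑' n, ‖Q‖ ^ m * ‖qc a Q (n + 1) * u ^ (n + 1)‖ := by
          apply Summable.tsum_le_tsum _ hsv' (hT.mul_left _)
          intro n
          rw [norm_mul, norm_mul, norm_pow, norm_mul, norm_pow, norm_pow]
          rw [mul_pow, ← pow_mul]
          rw [show ‖qc a Q (n+1)‖ * (‖Q‖ ^ (m * (n+1)) * ‖u‖ ^ (n+1))
              = ‖Q‖ ^ (m * (n+1)) * (‖qc a Q (n+1)‖ * ‖u‖ ^ (n+1)) by ring]
          apply mul_le_mul_of_nonneg_right _
            (mul_nonneg (norm_nonneg _) (pow_nonneg (norm_nonneg _) _))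
          exact pow_le_pow_of_le_one (norm_nonneg _) hQ.le (Nat.le_mul_of_pos_right m n.succ_pos)
      _ = ‖Q‖ ^ m * T := tsum_mul_left
  have hlim : Tendsto (fun m : ℕ => ‖Q‖ ^ m * T) atTop (𝓝 0) := by
    have := (tendsto_pow_atTop_nhds_zero_of_norm_lt_one (by rwa [Real.norm_eq_abs, abs_of_nonneg (norm_nonneg Q)] : ‖‖Q‖‖ < 1)).mul_const T
    simpa using this
  rw [tendsto_iff_norm_sub_tendsto_zero]
  exact squeeze_zero (fun m => norm_nonneg _) key hlim

end QBinAux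

namespace QBinAux

lemma log_summable {w Q : ℂ} (hQ : ‖Q‖ < 1) :
    Summable fun n => Complex.log (1 - w * Q ^ n) := by
  apply Summable.of_norm_bounded_eventually_nat (g := fun n => 3 / 2 * (‖w‖ * ‖Q‖ ^ n))
  · exact ((summable_geometric_of_lt_one (norm_nonneg _) hQ).mul_left _).mul_left _
  · have htend : Tendsto (fun n : ℕ => ‖w‖ * ‖Q‖ ^ n) atTop (𝓝 0) := by
      have := (tendsto_pow_atTop_nhds_zero_of_norm_lt_one
        (by rwa [Real.norm_eq_abs, abs_of_nonneg (norm_nonneg Q)] : ‖‖Q‖‖ < 1)).const_mul ‖w‖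
      simpa using this
    filter_upwards [htend.eventually_le_const (by norm_num : (0:ℝ) < 1/2)] with n hn
    have hwn : ‖-(w * Q ^ n)‖ ≤ 1 / 2 := by
      rw [norm_neg, norm_mul, norm_pow]
      exact hn
    have := Complex.norm_log_one_add_half_le_self hwn
    rw [show (1 : ℂ) + -(w * Q ^ n) = 1 - w * Q ^ n by ring] at this
    calc ‖Complex.log (1 - w * Q ^ n)‖ ≤ 3 / 2 * ‖-(w * Q ^ n)‖ := this
      _ = 3 / 2 * (‖w‖ * ‖Q‖ ^ n) := by rw [norm_neg, norm_mul, norm_pow]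

lemma hasProd_exp {w Q : ℂ} (hQ : ‖Q‖ < 1) (hfac : ∀ n : ℕ, (1 : ℂ) - w * Q ^ n ≠ 0) :
    HasProd (fun n : ℕ => 1 - w * Q ^ n)
      (Complex.exp (∑' n : ℕ, Complex.log (1 - w * Q ^ n))) := by
  have h := (log_summable (w := w) hQ).hasSum.cexp
  have heq : (Complex.exp ∘ fun n : ℕ => Complex.log (1 - w * Q ^ n))
      = fun n : ℕ => 1 - w * Q ^ n :=
    funext fun n => Complex.exp_log (hfac n)
  rwa [heq] at h

lemma hasProd_tprod {w Q : ℂ} (hQ : ‖Q‖ < 1) :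
    HasProd (fun n : ℕ => 1 - w * Q ^ n) (∏' n : ℕ, (1 - w * Q ^ n)) := by
  by_cases hfac : ∀ n : ℕ, (1 : ℂ) - w * Q ^ n ≠ 0
  · exact (hasProd_exp hQ hfac).multipliable.hasProd
  · push_neg at hfac
    obtain ⟨j, hj⟩ := hfac
    have h0 : HasProd (fun n : ℕ => 1 - w * Q ^ n) 0 := by
      rw [HasProd]
      have hev : ∀ᶠ s : Finset ℕ in atTop, ∏ i ∈ s, (1 - w * Q ^ i) = (0 : ℂ) := by
        filter_upwards [eventually_ge_atTop ({j} : Finset ℕ)] with s hs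
        exact Finset.prod_eq_zero (hs (Finset.mem_singleton_self j)) hj
      exact tendsto_const_nhds.congr' (hev.mono fun s hs => hs.symm)
    rw [h0.tprod_eq]
    exact h0

lemma tprod_ne_zero {w Q : ℂ} (hQ : ‖Q‖ < 1) (hfac : ∀ n : ℕ, (1 : ℂ) - w * Q ^ n ≠ 0) :
    (∏' n : ℕ, (1 - w * Q ^ n)) ≠ 0 := by
  rw [(hasProd_exp hQ hfac).tprod_eq]
  exact Complex.exp_ne_zero _

theorem qbinom {a Q u : ℂ} (hQ : ‖Q‖ < 1) (ha : ∀ m, qPoch a Q m ≠ 0) (hu : ‖u‖ < 1) :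
    (∑' n, qc a Q n * u ^ n) * (∏' n : ℕ, (1 - u * Q ^ n))
      = ∏' n : ℕ, (1 - a * u * Q ^ n) := by
  have h1 : Tendsto (fun m => S a Q u * ∏ i ∈ range m, (1 - u * Q ^ i)) atTop
      (𝓝 (S a Q u * ∏' n : ℕ, (1 - u * Q ^ n))) :=
    tendsto_const_nhds.mul (hasProd_tprod (w := u) hQ).tendsto_prod_nat
  have h2 : Tendsto (fun m => (∏ i ∈ range m, (1 - a * u * Q ^ i)) * S a Q (Q ^ m * u)) atTop
      (𝓝 ((∏' n : ℕ, (1 - a * u * Q ^ n)) * 1)) :=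
    (hasProd_tprod (w := a * u) hQ).tendsto_prod_nat.mul (tendsto_S hQ ha hu)
  have h3 := tendsto_nhds_unique (h1.congr (fun m => iter hQ ha hu m)) h2
  rw [mul_one] at h3
  exact h3

end QBinAux

open Filter Finset Topology QBinAux

/-- Generating function of the `A₁`-type Macdonald polynomials:
`Σ_{n≥0} M_n(x;q,t)·((t²;q²)_n/(q²;q²)_n)·z^n
  = (t²xz;q²)_∞ (t²x⁻¹z;q²)_∞ / ((xz;q²)_∞ (x⁻¹z;q²)_∞)`,
in the convergent regime `‖q‖ < 1`, `‖xz‖ < 1`, `‖x⁻¹z‖ < 1`. -/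
theorem macdonaldA1_generating_function (x q t z : ℂ) (hx0 : x ≠ 0)
    (hq : ‖q‖ < 1) (hxz : ‖x * z‖ < 1) (hxz' : ‖x⁻¹ * z‖ < 1)
    (htp : ∀ m : ℕ, qPoch (t ^ 2) (q ^ 2) m ≠ 0) :
    ∑' n : ℕ, macdonaldA1 n x q t * (qPoch (t ^ 2) (q ^ 2) n / qPoch (q ^ 2) (q ^ 2) n) * z ^ n =
      (∏' i : ℕ, (1 - t ^ 2 * x * z * (q ^ 2) ^ i)) *
          (∏' i : ℕ, (1 - t ^ 2 * x⁻¹ * z * (q ^ 2) ^ i)) /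
        ((∏' i : ℕ, (1 - x * z * (q ^ 2) ^ i)) * (∏' i : ℕ, (1 - x⁻¹ * z * (q ^ 2) ^ i))) := by
  have hQ : ‖q ^ 2‖ < 1 := by
    rw [norm_pow]
    exact pow_lt_one₀ (norm_nonneg _) hq two_ne_zero
  set Q : ℂ := q ^ 2 with hQdef
  set a : ℂ := t ^ 2 with hadef
  -- Step 1: rewrite each term of the sum
  have hterm : ∀ n : ℕ, macdonaldA1 n x q t * (qPoch a Q n / qPoch Q Q n) * z ^ n
      = ∑ j ∈ range (n + 1),
          (qc a Q j * (x * z) ^ j) * (qc a Q (n - j) * (x⁻¹ * z) ^ (n - j)) := by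
    intro n
    have hCD : qPoch Q Q n / qPoch a Q n * (qPoch a Q n / qPoch Q Q n) = 1 := by
      rw [div_mul_div_comm, mul_comm (qPoch Q Q n)]
      exact div_self (mul_ne_zero (htp n) (qPochQ_ne_zero hQ n))
    calc macdonaldA1 n x q t * (qPoch a Q n / qPoch Q Q n) * z ^ n
        = (qPoch Q Q n / qPoch a Q n * (qPoch a Q n / qPoch Q Q n)) *
            ((∑ j ∈ range (n + 1),
              qPoch a Q j * qPoch a Q (n - j) / (qPoch Q Q j * qPoch Q Q (n - j)) *
                x ^ ((j : ℤ) - ((n : ℤ) - (j : ℤ)))) * z ^ n) := by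
          unfold macdonaldA1
          ring
      _ = (∑ j ∈ range (n + 1),
              qPoch a Q j * qPoch a Q (n - j) / (qPoch Q Q j * qPoch Q Q (n - j)) *
                x ^ ((j : ℤ) - ((n : ℤ) - (j : ℤ)))) * z ^ n := by
          rw [hCD, one_mul]
      _ = ∑ j ∈ range (n + 1),
              qPoch a Q j * qPoch a Q (n - j) / (qPoch Q Q j * qPoch Q Q (n - j)) *
                x ^ ((j : ℤ) - ((n : ℤ) - (j : ℤ))) * z ^ n := Finset.sum_mul _ _ _
      _ = _ := by
          apply Finset.sum_congr rfl
          intro j hj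
          have hjn : j ≤ n := Nat.lt_succ_iff.mp (Finset.mem_range.mp hj)
          have hxp : x ^ ((j : ℤ) - ((n : ℤ) - (j : ℤ))) = x ^ j * (x⁻¹) ^ (n - j) := by
            have h1 : (j : ℤ) - ((n : ℤ) - (j : ℤ)) = (j : ℤ) - ((n - j : ℕ) : ℤ) := by
              push_cast [Nat.cast_sub hjn]
              ring
            rw [h1, zpow_sub₀ hx0, zpow_natCast, zpow_natCast, div_eq_mul_inv, inv_pow]
          have hz : z ^ n = z ^ j * z ^ (n - j) := by
            rw [← pow_add]
            congr 1
            omega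
          rw [hxp, hz, show qPoch a Q j * qPoch a Q (n - j) / (qPoch Q Q j * qPoch Q Q (n - j))
              = qc a Q j * qc a Q (n - j) from (div_mul_div_comm _ _ _ _).symm]
          unfold qc
          rw [mul_pow, mul_pow]
          ring
  rw [tsum_congr hterm]
  have hf : Summable fun n => ‖qc a Q n * (x * z) ^ n‖ := summable_norm_qc hQ htp hxz
  have hg : Summable fun n => ‖qc a Q n * (x⁻¹ * z) ^ n‖ := summable_norm_qc hQ htp hxz'
  rw [← tsum_mul_tsum_eq_tsum_sum_range_of_summable_norm hf hg]
  have hb1 := qbinom (u := x * z) hQ htp hxz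
  have hb2 := qbinom (u := x⁻¹ * z) hQ htp hxz'
  have hfac1 : ∀ n : ℕ, (1 : ℂ) - x * z * Q ^ n ≠ 0 := fun n => by
    apply one_sub_ne_zero
    rw [norm_mul, norm_pow]
    calc ‖x * z‖ * ‖Q‖ ^ n ≤ ‖x * z‖ * 1 :=
          mul_le_mul_of_nonneg_left (pow_le_one₀ (norm_nonneg _) hQ.le) (norm_nonneg _)
      _ < 1 := by simpa using hxz
  have hfac2 : ∀ n : ℕ, (1 : ℂ) - x⁻¹ * z * Q ^ n ≠ 0 := fun n => by
    apply one_sub_ne_zero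
    rw [norm_mul, norm_pow]
    calc ‖x⁻¹ * z‖ * ‖Q‖ ^ n ≤ ‖x⁻¹ * z‖ * 1 :=
          mul_le_mul_of_nonneg_left (pow_le_one₀ (norm_nonneg _) hQ.le) (norm_nonneg _)
      _ < 1 := by simpa using hxz'
  have hP1 : (∏' n : ℕ, (1 - x * z * Q ^ n)) ≠ 0 := tprod_ne_zero hQ hfac1
  have hP2 : (∏' n : ℕ, (1 - x⁻¹ * z * Q ^ n)) ≠ 0 := tprod_ne_zero hQ hfac2
  have hA1 : (∏' i : ℕ, (1 - a * x * z * Q ^ i)) = ∏' i : ℕ, (1 - a * (x * z) * Q ^ i) := by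
    apply tprod_congr
    intro i
    ring_nf
  have hA2 : (∏' i : ℕ, (1 - a * x⁻¹ * z * Q ^ i)) = ∏' i : ℕ, (1 - a * (x⁻¹ * z) * Q ^ i) := by
    apply tprod_congr
    intro i
    ring_nf
  rw [hA1, hA2, eq_div_iff (mul_ne_zero hP1 hP2)]
  linear_combination (∑' n, qc a Q n * (x⁻¹ * z) ^ n) * (∏' n : ℕ, (1 - x⁻¹ * z * Q ^ n)) * hb1
    + (∏' i : ℕ, (1 - a * (x * z) * Q ^ i)) * hb2
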